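/- arXiv:2605.23106 — 2 statements merged into one kernel-verified Lean document; each statement's English description precedes it below -/
import Mathlib

section
/- Let X be a real Banach space and I : X → ℝ a continuously Fréchet differentiable functional with I(0) = 0. Assume: (G1) there exist ρ > 0 and a > 0 such that I(u) ≥ a for every u ∈ X with ‖u‖ = ρ; (G2) there exists e ∈ X with ‖e‖ > ρ and I(e) ≤ 0; (PS) every sequence (u_k) in X for which (I(u_k)) is bounded in ℝ and ‖I′(u_k)‖_{X*} → 0 admits a subsequence converging in X. Let Γ denote the set of continuous maps g : [0,1] → X with g(0) = 0 and g(1) = e, and set c := inf_{g ∈ Γ} max_{t ∈ [0,1]} I(g(t)). Then c is a critical value of I: there exists w ∈ X with I(w) = c and I′(w) = 0. -/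
open Filter Topology

theorem ekeland_weak {α : Type*} [MetricSpace α] [CompleteSpace α]
    (f : α → ℝ) (hf : LowerSemicontinuous f) (B : ℝ) (hB : ∀ x, B ≤ f x)
    (ε : ℝ) (hε : 0 < ε) (x₀ : α) :
    ∃ x : α, f x ≤ f x₀ ∧ ∀ y : α, f x ≤ f y + ε * dist x y := by
  classical
  set S : α → Set α := fun x => {y | f y + ε * dist x y ≤ f x} with hS
  have hmem : ∀ x, x ∈ S x := fun x => by simp [hS]
  have htrans : ∀ x y z, y ∈ S x → z ∈ S y → z ∈ S x := by
    intro x y z hy hz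
    simp only [hS, Set.mem_setOf_eq] at *
    have h3 := dist_triangle x y z
    nlinarith [hy, hz, h3, hε.le]
  have hbdd : ∀ x, BddBelow (f '' S x) := by
    intro x
    exact ⟨B, by rintro z ⟨y, -, rfl⟩; exact hB y⟩
  have hstep : ∀ (n : ℕ) (x : α), ∃ y, y ∈ S x ∧ f y ≤ sInf (f '' S x) + (1/2)^n := by
    intro n x
    obtain ⟨z, hz, hz2⟩ := Real.lt_sInf_add_pos (s := f '' S x)
      ⟨f x, x, hmem x, rfl⟩ (by positivity : (0:ℝ) < (1/2)^n)
    obtain ⟨y, hy, rfl⟩ := hz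
    exact ⟨y, hy, hz2.le⟩
  choose nxt hnxt₁ hnxt₂ using hstep
  let u : ℕ → α := fun n => Nat.rec x₀ (fun n x => nxt n x) n
  have hu0 : u 0 = x₀ := rfl
  have hstepS : ∀ n, u (n+1) ∈ S (u n) := fun n => hnxt₁ n (u n)
  have hchain : ∀ n m, n ≤ m → u m ∈ S (u n) := by
    intro n m h
    induction h with
    | refl => exact hmem _
    | step h ih => exact htrans _ _ _ ih (hstepS _)
  have hdistle : ∀ n m, n ≤ m → ε * dist (u n) (u m) ≤ f (u n) - f (u m) := by
    intro n m h
    have := hchain n m h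
    simp only [hS, Set.mem_setOf_eq] at this
    linarith
  -- Cauchy
  have hsumm : Summable (fun n => dist (u n) (u (n+1))) := by
    apply summable_of_sum_range_le (c := (f x₀ - B)/ε) (fun n => dist_nonneg)
    intro n
    have : ∑ i ∈ Finset.range n, dist (u i) (u (i+1))
        ≤ ∑ i ∈ Finset.range n, (f (u i) - f (u (i+1)))/ε := by
      apply Finset.sum_le_sum
      intro i _
      rw [le_div_iff₀ hε]
      have := hdistle i (i+1) (Nat.le_succ i)
      nlinarith [dist_nonneg (x := u i) (y := u (i+1))]
    rw [← Finset.sum_div, Finset.sum_range_sub' (fun i => f (u i))] at this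
    refine this.trans ?_
    have hb := hB (u n)
    have : f (u 0) - f (u n) ≤ f x₀ - B := by rw [hu0]; linarith
    exact div_le_div_of_nonneg_right this hε.le
  have hcauchy : CauchySeq u := cauchySeq_of_summable_dist hsumm
  obtain ⟨x, hx⟩ := cauchySeq_tendsto_of_complete hcauchy
  -- key lower-semicontinuity estimate
  have hkey : ∀ n, f x + ε * dist (u n) x ≤ f (u n) := by
    intro n
    have hforall : ∀ c, c < f x → c ≤ f (u n) - ε * dist (u n) x := by
      intro c hc
      have hev1 : ∀ᶠ m in atTop, c < f (u m) := hx.eventually (hf x c hc)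
      have hev2 : ∀ᶠ m in atTop, n ≤ m := eventually_ge_atTop n
      have hev : ∀ᶠ m in atTop, c ≤ f (u n) - ε * dist (u n) (u m) := by
        filter_upwards [hev1, hev2] with m h1 h2
        have := hdistle n m h2
        linarith
      have htend : Tendsto (fun m => f (u n) - ε * dist (u n) (u m)) atTop
          (𝓝 (f (u n) - ε * dist (u n) x)) := by
        exact tendsto_const_nhds.sub (tendsto_const_nhds.mul
          ((continuous_const.dist continuous_id).continuousAt.tendsto.comp hx))
      exact ge_of_tendsto htend hev
    by_contra hcon
    push_neg at hcon
    obtain ⟨c, hc1, hc2⟩ := exists_between (show f (u n) - ε * dist (u n) x < f x by linarith)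
    exact absurd (hforall c hc2) (not_le.mpr hc1)
  have hfx0 : f x ≤ f x₀ := by
    have := hkey 0
    rw [hu0] at this
    nlinarith [dist_nonneg (x := u 0) (y := x), hε.le, mul_nonneg hε.le (dist_nonneg (x := x₀) (y := x))]
  refine ⟨x, hfx0, ?_⟩
  intro y
  by_contra hcon
  push_neg at hcon
  -- then y ∈ S (u n) for all n
  have hyS : ∀ n, y ∈ S (u n) := by
    intro n
    simp only [hS, Set.mem_setOf_eq]
    have h1 := hkey n
    have h2 := dist_triangle (u n) x y
    nlinarith [hε.le]
  have hfy : ∀ n, f (u (n+1)) ≤ f y + (1/2)^n := by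
    intro n
    have h1 : sInf (f '' S (u n)) ≤ f y := csInf_le (hbdd _) ⟨y, hyS n, rfl⟩
    have h2 := hnxt₂ n (u n)
    calc f (u (n+1)) ≤ sInf (f '' S (u n)) + (1/2)^n := h2
    _ ≤ f y + (1/2)^n := by linarith
  have hfxy : f x ≤ f y := by
    have hforall : ∀ c, c < f x → c ≤ f y := by
      intro c hc
      have hev1 : ∀ᶠ m in atTop, c < f (u m) := hx.eventually (hf x c hc)
      have hev : ∀ᶠ n in atTop, c ≤ f y + (1/2)^n := by
        have : ∀ᶠ n in atTop, c < f (u (n+1)) := (tendsto_add_atTop_nat 1).eventually hev1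
        filter_upwards [this] with n h1
        exact (le_of_lt h1).trans (hfy n)
      have htend : Tendsto (fun n : ℕ => f y + (1/2:ℝ)^n) atTop (𝓝 (f y)) := by
        have : Tendsto (fun n : ℕ => (1/2:ℝ)^n) atTop (𝓝 0) := by
          apply tendsto_pow_atTop_nhds_zero_of_lt_one <;> norm_num
        simpa using tendsto_const_nhds.add this
      exact ge_of_tendsto htend hev
    by_contra hcon2
    push_neg at hcon2
    obtain ⟨c, hc1, hc2⟩ := exists_between hcon2
    exact absurd (hforall c hc2) (not_le.mpr hc1)
  nlinarith [mul_nonneg hε.le (dist_nonneg (x := x) (y := y))]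

set_option maxHeartbeats 2000000 in
/-- **Mountain Pass Theorem.** Let `X` be a real Banach space and `I : X → ℝ` a
continuously Fréchet differentiable functional with `I 0 = 0` satisfying the geometric
conditions (G1), (G2) and the Palais–Smale condition. Then
`c := inf over paths g from 0 to e of max_{t ∈ [0,1]} I (g t)` is a critical value of `I`. -/
theorem mountain_pass_theorem
    {X : Type*} [NormedAddCommGroup X] [NormedSpace ℝ X] [CompleteSpace X]
    (I : X → ℝ) (I' : X → X →L[ℝ] ℝ)
    (hderiv : ∀ u : X, HasFDerivAt I (I' u) u)
    (hcont : Continuous I')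
    (hI0 : I 0 = 0)
    (ρ a : ℝ) (hρ : 0 < ρ) (ha : 0 < a)
    (hG1 : ∀ u : X, ‖u‖ = ρ → a ≤ I u)
    (e : X) (he : ρ < ‖e‖) (hIe : I e ≤ 0)
    (hPS : ∀ u : ℕ → X,
      (∃ M : ℝ, ∀ k, |I (u k)| ≤ M) →
      Tendsto (fun k => ‖I' (u k)‖) atTop (𝓝 0) →
      ∃ (w : X) (φ : ℕ → ℕ), StrictMono φ ∧ Tendsto (u ∘ φ) atTop (𝓝 w)) :
    ∃ w : X,
      I w = sInf {y : ℝ | ∃ g : C(Set.Icc (0:ℝ) 1, X),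
        g ⟨0, by norm_num⟩ = 0 ∧ g ⟨1, by norm_num⟩ = e ∧
        y = ⨆ t : Set.Icc (0:ℝ) 1, I (g t)} ∧
      I' w = 0 := by
  classical
  have hIcont : Continuous I :=
    continuous_iff_continuousAt.mpr fun u => (hderiv u).continuousAt
  set z0 : Set.Icc (0:ℝ) 1 := ⟨0, by norm_num⟩ with hz0
  set z1 : Set.Icc (0:ℝ) 1 := ⟨1, by norm_num⟩ with hz1
  haveI : Nonempty (Set.Icc (0:ℝ) 1) := ⟨z0⟩
  set Sv := {y : ℝ | ∃ g : C(Set.Icc (0:ℝ) 1, X),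
        g z0 = 0 ∧ g z1 = e ∧
        y = ⨆ t : Set.Icc (0:ℝ) 1, I (g t)} with hSv
  -- bddAbove of values along a path
  have hbdd : ∀ g : C(Set.Icc (0:ℝ) 1, X), BddAbove (Set.range (fun t => I (g t))) :=
    fun g => (isCompact_range (hIcont.comp g.continuous)).bddAbove
  -- sup attained
  have hattain : ∀ g : C(Set.Icc (0:ℝ) 1, X), ∃ t, I (g t) = ⨆ t, I (g t) := by
    intro g
    obtain ⟨t0, -, ht0⟩ := isCompact_univ.exists_isMaxOn Set.univ_nonempty
      (hIcont.comp g.continuous).continuousOn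
    exact ⟨t0, le_antisymm (le_ciSup (hbdd g) t0)
      (ciSup_le fun t => ht0 (Set.mem_univ t))⟩
  -- any admissible path crosses the sphere of radius ρ
  have hcross : ∀ g : C(Set.Icc (0:ℝ) 1, X), g z0 = 0 → g z1 = e →
      ∃ t, ‖g t‖ = ρ := by
    intro g h0 h1
    set G : ℝ → ℝ := fun r => ‖g (Set.projIcc 0 1 zero_le_one r)‖ with hG
    have hGc : ContinuousOn G (Set.Icc 0 1) :=
      ((g.continuous.comp continuous_projIcc).norm).continuousOn
    have hG0 : G 0 = 0 := by
      simp only [hG, Set.projIcc_left]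
      rw [show (⟨0, Set.left_mem_Icc.mpr zero_le_one⟩ : Set.Icc (0:ℝ) 1) = z0 from rfl, h0,
        norm_zero]
    have hG1 : G 1 = ‖e‖ := by
      simp only [hG, Set.projIcc_right]
      rw [show (⟨1, Set.right_mem_Icc.mpr zero_le_one⟩ : Set.Icc (0:ℝ) 1) = z1 from rfl, h1]
    have hmem : ρ ∈ Set.Icc (G 0) (G 1) := by
      rw [hG0, hG1]; exact ⟨hρ.le, he.le⟩
    obtain ⟨r, hr, hGr⟩ := intermediate_value_Icc zero_le_one hGc hmem
    refine ⟨⟨r, hr⟩, ?_⟩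
    rw [← hGr]
    simp only [hG, Set.projIcc_of_mem zero_le_one hr]
  -- lower bound on sup values
  have hlow : ∀ g : C(Set.Icc (0:ℝ) 1, X), g z0 = 0 → g z1 = e →
      a ≤ ⨆ t, I (g t) := by
    intro g h0 h1
    obtain ⟨t, ht⟩ := hcross g h0 h1
    exact (hG1 _ ht).trans (le_ciSup (hbdd g) t)
  -- Sv is nonempty
  have hSne : Sv.Nonempty := by
    refine ⟨_, ⟨⟨fun t => (t:ℝ) • e, (continuous_subtype_val).smul continuous_const⟩,
      ?_, ?_, rfl⟩⟩
    · simp [hz0]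
    · simp [hz1]
  have hSbdd : BddBelow Sv := by
    refine ⟨a, ?_⟩
    rintro y ⟨g, h0, h1, rfl⟩
    exact hlow g h0 h1
  set c := sInf Sv with hc
  have hca : a ≤ c := le_csInf hSne (by rintro y ⟨g, h0, h1, rfl⟩; exact hlow g h0 h1)
  have key : ∀ ε : ℝ, 0 < ε → ∃ u : X, c ≤ I u ∧ I u ≤ c + ε ∧ ‖I' u‖ ≤ 3 * ε := by
    intro ε hε
    by_contra hcon
    push_neg at hcon
    set Γ : Set C(Set.Icc (0:ℝ) 1, X) := {g | g z0 = 0 ∧ g z1 = e} with hΓ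
    have hΓclosed : IsClosed Γ :=
      (isClosed_eq (continuous_eval_const z0) continuous_const).inter
        (isClosed_eq (continuous_eval_const z1) continuous_const)
    haveI : CompleteSpace ↥Γ := hΓclosed.completeSpace_coe
    set Φ : ↥Γ → ℝ := fun g => ⨆ t, I (g.1 t) with hΦ
    have hevalcont : ∀ t, Continuous (fun h : ↥Γ => I (h.1 t)) := fun t =>
      hIcont.comp ((continuous_eval_const t).comp continuous_subtype_val)
    have hΦlsc : LowerSemicontinuous Φ := by
      intro g b hb
      obtain ⟨t, ht⟩ := (lt_ciSup_iff (hbdd g.1)).mp hb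
      have hev : ∀ᶠ h : ↥Γ in 𝓝 g, b < I (h.1 t) :=
        ((hevalcont t).continuousAt).eventually_const_lt ht
      filter_upwards [hev] with h hh
      exact hh.trans_le (le_ciSup (hbdd h.1) t)
    have hΦa : ∀ h : ↥Γ, a ≤ Φ h := fun h => hlow h.1 h.2.1 h.2.2
    obtain ⟨y₀, hy₀S, hy₀lt⟩ := Real.lt_sInf_add_pos hSne hε
    obtain ⟨g₀', hg₀0, hg₀1, hy₀⟩ := hy₀S
    obtain ⟨g, hgΦ, hgE⟩ := ekeland_weak Φ hΦlsc a hΦa ε hε ⟨g₀', hg₀0, hg₀1⟩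
    have hgc : Φ g ≤ c + ε := by
      refine hgΦ.trans ?_
      rw [hΦ]
      simp only
      rw [← hy₀]
      exact hy₀lt.le
    have hcg : c ≤ Φ g := csInf_le hSbdd ⟨g.1, g.2.1, g.2.2, rfl⟩
    set δ : ℝ := 3 * ε with hδdef
    have hδ : 0 < δ := by positivity
    set M : Set (Set.Icc (0:ℝ) 1) := {t | I (g.1 t) = Φ g} with hM
    have hMne : M.Nonempty := hattain g.1
    have hMd : ∀ t ∈ M, δ < ‖I' (g.1 t)‖ := by
      intro t ht
      have h1 : c ≤ I (g.1 t) := by rw [ht]; exact hcg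
      have h2 : I (g.1 t) ≤ c + ε := by rw [ht]; exact hgc
      exact hcon _ h1 h2
    have hvex : ∀ t, t ∈ M → ∃ v : X, ‖v‖ ≤ 1 ∧ δ < I' (g.1 t) v := by
      intro t ht
      obtain ⟨x, hx1, hx2⟩ :=
        ContinuousLinearMap.exists_lt_apply_of_lt_opNorm (I' (g.1 t)) (hMd t ht)
      rcases le_or_gt 0 (I' (g.1 t) x) with h | h
      · exact ⟨x, hx1.le, by rwa [Real.norm_eq_abs, abs_of_nonneg h] at hx2⟩
      · refine ⟨-x, by simpa using hx1.le, ?_⟩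
        rw [map_neg]
        rwa [Real.norm_eq_abs, abs_of_neg h] at hx2
    have hvex' : ∀ t : Set.Icc (0:ℝ) 1, ∃ v : X, ‖v‖ ≤ 1 ∧ (t ∈ M → δ < I' (g.1 t) v) := by
      intro t
      by_cases ht : t ∈ M
      · obtain ⟨v, h1, h2⟩ := hvex t ht
        exact ⟨v, h1, fun _ => h2⟩
      · exact ⟨0, by simp, fun h => absurd h ht⟩
    choose v hv1 hv2 using hvex'
    set A : Set.Icc (0:ℝ) 1 → Set (Set.Icc (0:ℝ) 1) :=
      fun t => {s | δ < I' (g.1 s) (v t)} with hA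
    have hAopen : ∀ t, IsOpen (A t) := by
      intro t
      have hc2 : Continuous fun s : Set.Icc (0:ℝ) 1 => I' (g.1 s) (v t) :=
        (ContinuousLinearMap.apply ℝ ℝ (v t)).continuous.comp (hcont.comp g.1.continuous)
      exact isOpen_lt continuous_const hc2
    have hMclosed : IsClosed M := isClosed_eq (hIcont.comp g.1.continuous) continuous_const
    have hMcpt : IsCompact M := hMclosed.isCompact
    have hMsub : M ⊆ ⋃ t ∈ M, A t := fun t ht => Set.mem_biUnion ht (hv2 t ht)
    obtain ⟨T, hTM, hTfin, hTsub⟩ :=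
      hMcpt.elim_finite_subcover_image (fun t _ => hAopen t) hMsub
    haveI : Fintype ↥T := hTfin.fintype
    set W : Set (Set.Icc (0:ℝ) 1) := ⋃ t ∈ T, A t with hW
    have hWopen : IsOpen W := isOpen_biUnion fun t _ => hAopen t
    -- choose the cutoff level θ
    have hθex : ∃ θ : ℝ, 0 < θ ∧ θ ≤ a/2 ∧ ∀ s, Φ g - θ ≤ I (g.1 s) → s ∈ W := by
      rcases Set.eq_empty_or_nonempty Wᶜ with hWc | hWc
      · refine ⟨a/2, by positivity, le_refl _, fun s _ => ?_⟩
        by_contra hs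
        exact absurd (hWc ▸ (Set.mem_compl hs)) (Set.notMem_empty s)
      · have hWccpt : IsCompact Wᶜ := hWopen.isClosed_compl.isCompact
        obtain ⟨s0, hs0W, hs0max⟩ := hWccpt.exists_isMaxOn hWc
          (hIcont.comp g.1.continuous).continuousOn
        have hlt : I (g.1 s0) < Φ g := by
          rcases lt_or_eq_of_le (le_ciSup (hbdd g.1) s0) with h | h
          · exact h
          · exact absurd (hTsub h) hs0W
        refine ⟨min (a/2) ((Φ g - I (g.1 s0))/2), lt_min (by positivity) (by linarith),
          min_le_left _ _, fun s hs => ?_⟩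
        by_contra hsW
        have h1 : I (g.1 s) ≤ I (g.1 s0) := hs0max (Set.mem_compl hsW)
        have h2 : min (a/2) ((Φ g - I (g.1 s0))/2) ≤ (Φ g - I (g.1 s0))/2 := min_le_right _ _
        linarith
    obtain ⟨θ, hθpos, hθa, hθW⟩ := hθex
    set C : Set (Set.Icc (0:ℝ) 1) := {s | Φ g - θ ≤ I (g.1 s)} with hC
    have hCclosed : IsClosed C :=
      isClosed_le continuous_const (hIcont.comp g.1.continuous)
    have hCsub : C ⊆ ⋃ i : T, A ↑i := by
      intro s hs
      have := hθW s hs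
      rwa [hW, Set.biUnion_eq_iUnion] at this
    obtain ⟨pu, hpu⟩ := PartitionOfUnity.exists_isSubordinate hCclosed
      (fun i : T => A ↑i) (fun i => hAopen _) hCsub
    set V : Set.Icc (0:ℝ) 1 → X := fun s => ∑ i : T, pu i s • v ↑i with hV
    have hVcont : Continuous V :=
      continuous_finset_sum _ fun i _ => ((pu i).continuous).smul continuous_const
    have hpusum : ∀ s, ∑ i : T, pu i s ≤ 1 := by
      intro s
      have := pu.sum_le_one s
      rwa [finsum_eq_sum_of_fintype] at this
    have hpusum1 : ∀ s ∈ C, ∑ i : T, pu i s = 1 := by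
      intro s hs
      have := pu.sum_eq_one hs
      rwa [finsum_eq_sum_of_fintype] at this
    have hVnorm : ∀ s, ‖V s‖ ≤ 1 := by
      intro s
      refine (norm_sum_le _ _).trans ?_
      refine le_trans (Finset.sum_le_sum (fun i _ => ?_)) (hpusum s)
      rw [norm_smul, Real.norm_eq_abs, abs_of_nonneg (pu.nonneg i s)]
      calc pu i s * ‖v ↑i‖ ≤ pu i s * 1 :=
        mul_le_mul_of_nonneg_left (hv1 _) (pu.nonneg i s)
      _ = pu i s := mul_one _
    have hVdir : ∀ s ∈ C, δ ≤ I' (g.1 s) (V s) := by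
      intro s hs
      have hexp : I' (g.1 s) (V s) = ∑ i : T, pu i s * I' (g.1 s) (v ↑i) := by
        rw [hV, map_sum]
        congr 1
        ext i
        rw [ContinuousLinearMap.map_smul, smul_eq_mul]
      rw [hexp]
      have hterm : ∀ i : T, pu i s * δ ≤ pu i s * I' (g.1 s) (v ↑i) := by
        intro i
        rcases eq_or_lt_of_le (pu.nonneg i s) with h | h
        · rw [← h]; simp
        · have hsup : s ∈ A ↑i := hpu i (subset_closure (by
            simp only [Function.mem_support]
            exact ne_of_gt h))
          have : δ < I' (g.1 s) (v ↑i) := hsup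
          exact mul_le_mul_of_nonneg_left this.le (pu.nonneg i s)
      calc δ = (∑ i : T, pu i s) * δ := by rw [hpusum1 s hs, one_mul]
      _ = ∑ i : T, pu i s * δ := Finset.sum_mul _ _ _
      _ ≤ _ := Finset.sum_le_sum fun i _ => hterm i
    set ψ : Set.Icc (0:ℝ) 1 → ℝ :=
      fun s => max 0 (min 1 ((2/θ) * (I (g.1 s) - (Φ g - θ)))) with hψ
    have hψcont : Continuous ψ :=
      continuous_const.max (continuous_const.min
        (continuous_const.mul ((hIcont.comp g.1.continuous).sub continuous_const)))
    have hψ0 : ∀ s, 0 ≤ ψ s := fun s => le_max_left _ _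
    have hψ1 : ∀ s, ψ s ≤ 1 := fun s =>
      max_le (by norm_num) (min_le_left _ _)
    have hψzero : ∀ s, I (g.1 s) ≤ Φ g - θ → ψ s = 0 := by
      intro s hs
      have h1 : (2/θ) * (I (g.1 s) - (Φ g - θ)) ≤ 0 :=
        mul_nonpos_of_nonneg_of_nonpos (by positivity) (by linarith)
      rw [hψ]
      simp only
      rw [max_eq_left ((min_le_right _ _).trans h1)]
    have hψone : ∀ s, I (g.1 s) = Φ g → ψ s = 1 := by
      intro s hs
      have h1 : (1:ℝ) ≤ (2/θ) * (I (g.1 s) - (Φ g - θ)) := by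
        rw [hs]
        rw [show Φ g - (Φ g - θ) = θ by ring, div_mul_eq_mul_div, le_div_iff₀ hθpos]
        linarith
      rw [hψ]
      simp only
      rw [min_eq_left h1, max_eq_right (by norm_num)]
    have hψhalf : ∀ s, ψ s < 1 → I (g.1 s) ≤ Φ g - θ/2 := by
      intro s hs
      by_contra hcon2
      push_neg at hcon2
      have h1 : (1:ℝ) ≤ (2/θ) * (I (g.1 s) - (Φ g - θ)) := by
        rw [div_mul_eq_mul_div, le_div_iff₀ hθpos]
        nlinarith
      rw [hψ] at hs
      simp only at hs
      rw [min_eq_left h1, max_eq_right (by norm_num)] at hs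
      exact absurd hs (lt_irrefl 1)
    have hψC : ∀ s, ψ s ≠ 0 → s ∈ C := by
      intro s hs
      by_contra hsC
      refine hs (hψzero s ?_)
      rw [hC] at hsC
      simp only [Set.mem_setOf_eq, not_le] at hsC
      linarith
    set wf : Set.Icc (0:ℝ) 1 → X := fun s => ψ s • V s with hwf
    have hwfcont : Continuous wf := hψcont.smul hVcont
    have hwfnorm : ∀ s, ‖wf s‖ ≤ ψ s := by
      intro s
      rw [hwf]
      simp only
      rw [norm_smul, Real.norm_eq_abs, abs_of_nonneg (hψ0 s)]
      calc ψ s * ‖V s‖ ≤ ψ s * 1 := mul_le_mul_of_nonneg_left (hVnorm s) (hψ0 s)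
      _ = ψ s := mul_one _
    have hdir : ∀ s, δ * ψ s ≤ I' (g.1 s) (wf s) := by
      intro s
      rcases eq_or_ne (ψ s) 0 with h | h
      · rw [hwf]
        simp only
        rw [h, zero_smul, map_zero, mul_zero]
      · have hsC := hψC s h
        rw [hwf]
        simp only
        rw [ContinuousLinearMap.map_smul, smul_eq_mul, mul_comm δ (ψ s)]
        exact mul_le_mul_of_nonneg_left (hVdir s hsC) (hψ0 s)
    have hGcont : Continuous (fun p : (Set.Icc (0:ℝ) 1) × ℝ =>
        ‖I' (g.1 p.1 - p.2 • wf p.1) - I' (g.1 p.1)‖) := by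
      have h1 : Continuous (fun p : (Set.Icc (0:ℝ) 1) × ℝ => g.1 p.1 - p.2 • wf p.1) :=
        (g.1.continuous.comp continuous_fst).sub
          (continuous_snd.smul (hwfcont.comp continuous_fst))
      exact ((hcont.comp h1).sub (hcont.comp (g.1.continuous.comp continuous_fst))).norm
    have hlam0ex : ∃ lam₀ : ℝ, 0 < lam₀ ∧ lam₀ ≤ 1 ∧ ∀ s, ∀ μ : ℝ, 0 ≤ μ → μ ≤ lam₀ →
        ‖I' (g.1 s - μ • wf s) - I' (g.1 s)‖ ≤ δ/4 := by
      set Bad : Set ((Set.Icc (0:ℝ) 1) × ℝ) :=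
        {p | p.2 ∈ Set.Icc (0:ℝ) 1 ∧
          δ/4 ≤ ‖I' (g.1 p.1 - p.2 • wf p.1) - I' (g.1 p.1)‖} with hBad
      have hBadclosed : IsClosed Bad :=
        (isClosed_Icc.preimage continuous_snd).inter (isClosed_le continuous_const hGcont)
      have hBadsub : Bad ⊆ (Set.univ ×ˢ Set.Icc (0:ℝ) 1) := fun p hp => ⟨Set.mem_univ _, hp.1⟩
      have hBadcpt : IsCompact Bad :=
        (isCompact_univ.prod isCompact_Icc).of_isClosed_subset hBadclosed hBadsub
      rcases Set.eq_empty_or_nonempty Bad with hB | hB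
      · refine ⟨1, one_pos, le_refl _, fun s μ h0 h1 => ?_⟩
        by_contra hcon2
        push_neg at hcon2
        have hmem : (s, μ) ∈ Bad := ⟨⟨h0, h1⟩, hcon2.le⟩
        rw [hB] at hmem
        exact Set.notMem_empty _ hmem
      · obtain ⟨p₀, hp₀, hp₀min⟩ := hBadcpt.exists_isMinOn hB continuous_snd.continuousOn
        have hp₀pos : 0 < p₀.2 := by
          rcases eq_or_lt_of_le hp₀.1.1 with h | h
          · exfalso
            have h2 := hp₀.2
            rw [← h] at h2
            simp only [zero_smul, sub_zero, sub_self, norm_zero] at h2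
            linarith
          · exact h
        refine ⟨p₀.2/2, by positivity, by linarith [hp₀.1.2], fun s μ h0 h1 => ?_⟩
        by_contra hcon2
        push_neg at hcon2
        have hmem : (s, μ) ∈ Bad := ⟨⟨h0, by linarith [hp₀.1.2]⟩, hcon2.le⟩
        have h2 : p₀.2 ≤ μ := hp₀min hmem
        linarith
    obtain ⟨lam₀, hlam₀pos, hlam₀le, hlam₀⟩ := hlam0ex
    set lam := min lam₀ (θ/δ) with hlamdef
    have hlampos : 0 < lam := lt_min hlam₀pos (by positivity)
    have hlamle : lam ≤ lam₀ := min_le_left _ _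
    have hlamθ : lam * δ ≤ θ := by
      have h1 := min_le_right lam₀ (θ/δ)
      calc lam * δ ≤ (θ/δ) * δ := mul_le_mul_of_nonneg_right h1 hδ.le
      _ = θ := div_mul_cancel₀ θ (ne_of_gt hδ)
    -- endpoints are unmoved
    have hΦge : a/2 ≤ Φ g - θ := by linarith [hcg, hca]
    have hwz0 : wf z0 = 0 := by
      have h0 : I (g.1 z0) ≤ Φ g - θ := by
        rw [g.2.1, hI0]; linarith
      rw [hwf]; simp only; rw [hψzero z0 h0, zero_smul]
    have hwz1 : wf z1 = 0 := by
      have h0 : I (g.1 z1) ≤ Φ g - θ := by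
        rw [g.2.2]; linarith
      rw [hwf]; simp only; rw [hψzero z1 h0, zero_smul]
    set hmap : C(Set.Icc (0:ℝ) 1, X) :=
      ⟨fun s => g.1 s - lam • wf s,
        g.1.continuous.sub (continuous_const.smul hwfcont)⟩ with hhmap
    have hend0 : hmap z0 = 0 := by
      simp only [hhmap, ContinuousMap.coe_mk]
      rw [hwz0, smul_zero, sub_zero, g.2.1]
    have hend1 : hmap z1 = e := by
      simp only [hhmap, ContinuousMap.coe_mk]
      rw [hwz1, smul_zero, sub_zero, g.2.2]
    set gh : ↥Γ := ⟨hmap, hend0, hend1⟩ with hgh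
    have hdist2 : dist g gh ≤ lam := by
      rw [Subtype.dist_eq]
      rw [ContinuousMap.dist_le hlampos.le]
      intro s
      rw [dist_eq_norm]
      show ‖g.1 s - (g.1 s - lam • wf s)‖ ≤ lam
      rw [show g.1 s - (g.1 s - lam • wf s) = lam • wf s by abel]
      rw [norm_smul, Real.norm_eq_abs, abs_of_nonneg hlampos.le]
      calc lam * ‖wf s‖ ≤ lam * 1 :=
        mul_le_mul_of_nonneg_left ((hwfnorm s).trans (hψ1 s)) hlampos.le
      _ = lam := mul_one _
    -- pointwise decrease along the deformed path
    have hpoint : ∀ s, I (g.1 s - lam • wf s) ≤ Φ g - lam * δ / 2 := by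
      intro s
      have hF' : ∀ μ : ℝ, HasDerivAt (fun μ : ℝ => I (g.1 s - μ • wf s))
          (-(I' (g.1 s - μ • wf s) (wf s))) μ := by
        intro μ
        have hcurve : HasDerivAt (fun μ : ℝ => g.1 s - μ • wf s) (-(wf s)) μ := by
          have h1 : HasDerivAt (fun μ : ℝ => μ • wf s) ((1:ℝ) • wf s) μ :=
            (hasDerivAt_id μ).smul_const (wf s)
          simpa using h1.const_sub (g.1 s)
        have h2 := (hderiv (g.1 s - μ • wf s)).comp_hasDerivAt μ hcurve
        simp at h2
        exact h2
      obtain ⟨μ, hμmem, hμeq⟩ := exists_hasDerivAt_eq_slope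
        (fun μ : ℝ => I (g.1 s - μ • wf s))
        (fun μ : ℝ => -(I' (g.1 s - μ • wf s) (wf s))) hlampos
        (fun μ _ => (hF' μ).continuousAt.continuousWithinAt)
        (fun μ _ => hF' μ)
      have hslope : I (g.1 s - lam • wf s) =
          I (g.1 s) - lam * I' (g.1 s - μ • wf s) (wf s) := by
        have h2 := hμeq
        rw [sub_zero] at h2
        have h3 : -(I' (g.1 s - μ • wf s) (wf s)) * lam
            = I (g.1 s - lam • wf s) - I (g.1 s - (0:ℝ) • wf s) := by
          rw [h2]
          field_simp
        simp only [zero_smul, sub_zero] at h3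
        linarith
      have hμ0 : 0 ≤ μ := hμmem.1.le
      have hμlam : μ ≤ lam₀ := hμmem.2.le.trans hlamle
      have herr : ‖I' (g.1 s - μ • wf s) - I' (g.1 s)‖ ≤ δ/4 := hlam₀ s μ hμ0 hμlam
      have hest : δ * ψ s - δ/4 * ψ s ≤ I' (g.1 s - μ • wf s) (wf s) := by
        have h4 : |(I' (g.1 s - μ • wf s) - I' (g.1 s)) (wf s)| ≤ δ/4 * ψ s := by
          calc |(I' (g.1 s - μ • wf s) - I' (g.1 s)) (wf s)|
              ≤ ‖I' (g.1 s - μ • wf s) - I' (g.1 s)‖ * ‖wf s‖ := by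
                rw [← Real.norm_eq_abs]
                exact (I' (g.1 s - μ • wf s) - I' (g.1 s)).le_opNorm _
          _ ≤ δ/4 * ψ s := mul_le_mul herr (hwfnorm s) (norm_nonneg _) (by positivity)
        have h5 : (I' (g.1 s - μ • wf s) - I' (g.1 s)) (wf s)
            = I' (g.1 s - μ • wf s) (wf s) - I' (g.1 s) (wf s) := rfl
        have h6 := hdir s
        have h7 := (abs_le.mp h4).1
        rw [h5] at h7
        linarith
      have hIle : I (g.1 s) ≤ Φ g := le_ciSup (hbdd g.1) s
      rcases eq_or_lt_of_le (hψ1 s) with h | h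
      · -- ψ s = 1
        rw [hslope]
        have h8 : 3/4 * δ ≤ I' (g.1 s - μ • wf s) (wf s) := by
          rw [h] at hest; linarith
        have h9 : lam * (3/4 * δ) ≤ lam * I' (g.1 s - μ • wf s) (wf s) :=
          mul_le_mul_of_nonneg_left h8 hlampos.le
        nlinarith [mul_pos hlampos hδ]
      · have h8 := hψhalf s h
        have h9 : 0 ≤ I' (g.1 s - μ • wf s) (wf s) := by
          have := hest
          nlinarith [hψ0 s, hδ.le]
        rw [hslope]
        have h10 : 0 ≤ lam * I' (g.1 s - μ • wf s) (wf s) :=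
          mul_nonneg hlampos.le h9
        linarith
    have hΦgh : Φ gh ≤ Φ g - lam * δ / 2 := by
      have hrfl : Φ gh = ⨆ t, I (hmap t) := rfl
      rw [hrfl]
      refine ciSup_le fun s => ?_
      have : hmap s = g.1 s - lam • wf s := rfl
      rw [this]
      exact hpoint s
    have hEk := hgE gh
    have h11 : ε * dist g gh ≤ ε * lam := mul_le_mul_of_nonneg_left hdist2 hε.le
    rw [hδdef] at hΦgh
    nlinarith [mul_pos hlampos hε]
  -- construct Palais–Smale sequence
  have hseq : ∀ k : ℕ, ∃ u : X, c ≤ I u ∧ I u ≤ c + 1/(k+1) ∧ ‖I' u‖ ≤ 3 * (1/(k+1)) :=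
    fun k => key (1/(k+1)) (by positivity)
  choose u hu1 hu2 hu3 using hseq
  have hone : ∀ k : ℕ, 1/((k:ℝ)+1) ≤ 1 := by
    intro k
    rw [div_le_one (by positivity)]
    linarith [Nat.cast_nonneg (α := ℝ) k]
  have hbound : ∃ M, ∀ k, |I (u k)| ≤ M := by
    refine ⟨|c| + 1, fun k => abs_le.mpr ⟨?_, ?_⟩⟩
    · linarith [hu1 k, neg_abs_le c]
    · linarith [hu2 k, le_abs_self c, hone k]
  have honetend : Tendsto (fun k : ℕ => 1/((k:ℝ)+1)) atTop (𝓝 0) :=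
    tendsto_one_div_add_atTop_nhds_zero_nat
  have htend : Tendsto (fun k => ‖I' (u k)‖) atTop (𝓝 0) := by
    refine squeeze_zero (fun k => norm_nonneg _) hu3 ?_
    simpa using honetend.const_mul (3:ℝ)
  obtain ⟨w, φ, hφ, hwt⟩ := hPS u hbound htend
  have hφk : ∀ k : ℕ, (k:ℝ) ≤ (φ k : ℝ) := fun k => Nat.cast_le.mpr (hφ.le_apply)
  refine ⟨w, ?_, ?_⟩
  · have h1 : Tendsto (fun k => I (u (φ k))) atTop (𝓝 (I w)) :=
      (hIcont.tendsto w).comp hwt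
    have h2 : Tendsto (fun k => I (u (φ k))) atTop (𝓝 c) := by
      refine tendsto_of_tendsto_of_tendsto_of_le_of_le (g := fun _ : ℕ => c)
        tendsto_const_nhds (by simpa using tendsto_const_nhds.add honetend)
        (fun k => hu1 (φ k)) (fun k => ?_)
      have h3 : 1/((φ k:ℝ)+1) ≤ 1/((k:ℝ)+1) := by
        apply one_div_le_one_div_of_le (by positivity)
        have := hφk k
        linarith
      rw [← one_div]
      linarith [hu2 (φ k)]
    exact tendsto_nhds_unique h1 h2
  · have h1 : Tendsto (fun k => ‖I' (u (φ k))‖) atTop (𝓝 (‖I' w‖)) :=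
      (continuous_norm.tendsto _).comp ((hcont.tendsto w).comp hwt)
    have h2 : Tendsto (fun k => ‖I' (u (φ k))‖) atTop (𝓝 0) := by
      refine squeeze_zero (g := fun k : ℕ => 3 * (1/((k:ℝ)+1))) (fun k => norm_nonneg _)
        (fun k => ?_) (by simpa using honetend.const_mul (3:ℝ))
      refine (hu3 (φ k)).trans ?_
      have h3 : 1/((φ k:ℝ)+1) ≤ 1/((k:ℝ)+1) := by
        apply one_div_le_one_div_of_le (by positivity)
        have := hφk k
        linarith
      linarith
    have := tendsto_nhds_unique h1 h2
    exact norm_eq_zero.mp this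
end

section
/- Let n ≥ 1, let γ ∈ L¹(ℝⁿ) be even (γ(−z) = γ(z) for all z), and let u, v ∈ L²(ℝⁿ). Then ∫_{ℝⁿ} (𝓛u)(x) v(x) dx = −(1/2) ∬_{ℝⁿ×ℝⁿ} (u(y) − u(x)) γ(x − y) (v(y) − v(x)) dy dx, and both sides are finite (nonlocal Green's identity). -/
open MeasureTheory ENNReal

section Helpers

variable {n : ℕ}

private lemma l2mul {α : Type*} [MeasurableSpace α] {μ : Measure α} {f g : α → ℝ}
    (hf : MemLp f 2 μ) (hg : MemLp g 2 μ) :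
    Integrable (fun x => f x * g x) μ := by
  rw [← memLp_one_iff_integrable]
  refine ⟨hf.aestronglyMeasurable.mul hg.aestronglyMeasurable, ?_⟩
  calc eLpNorm (fun x => f x * g x) 1 μ
      ≤ eLpNorm f 2 μ * eLpNorm g 2 μ := by
        refine (eLpNorm_le_eLpNorm_mul_eLpNorm'_of_norm (p := 2) (q := 2) (r := 1)
          hf.aestronglyMeasurable hg.aestronglyMeasurable (· * ·) 1
          (Filter.Eventually.of_forall fun x => ?_)).trans_eq (by simp)
        · simp [abs_mul, le_refl]
    _ < ⊤ := ENNReal.mul_lt_top hf.2 hg.2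

private lemma aux_diag_fst {γ h : EuclideanSpace ℝ (Fin n) → ℝ}
    (hγ : Integrable γ (volume : Measure (EuclideanSpace ℝ (Fin n))))
    (hh : Integrable h (volume : Measure (EuclideanSpace ℝ (Fin n)))) :
    Integrable (fun p : EuclideanSpace ℝ (Fin n) × EuclideanSpace ℝ (Fin n) =>
      h p.1 * γ (p.1 - p.2)) (volume.prod volume) := by
  set μ := (volume : Measure (EuclideanSpace ℝ (Fin n)))
  have hγn : Integrable (fun w : EuclideanSpace ℝ (Fin n) => γ (-w)) μ :=
    (Measure.measurePreserving_neg μ).integrable_comp hγ.aestronglyMeasurable |>.mpr hγ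
  have hW : Integrable (fun p : EuclideanSpace ℝ (Fin n) × EuclideanSpace ℝ (Fin n) =>
      h p.1 * γ (-p.2)) (μ.prod μ) := hh.mul_prod hγn
  have := (measurePreserving_prod_sub (G := EuclideanSpace ℝ (Fin n)) μ μ).integrable_comp
    hW.aestronglyMeasurable |>.mpr hW
  refine this.congr (Filter.Eventually.of_forall fun p => ?_)
  simp [Function.comp_def, neg_sub]

private lemma aux_diag_snd {γ h : EuclideanSpace ℝ (Fin n) → ℝ}
    (hγ : Integrable γ (volume : Measure (EuclideanSpace ℝ (Fin n))))
    (hh : Integrable h (volume : Measure (EuclideanSpace ℝ (Fin n)))) :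
    Integrable (fun p : EuclideanSpace ℝ (Fin n) × EuclideanSpace ℝ (Fin n) =>
      h p.2 * γ (p.1 - p.2)) (volume.prod volume) := by
  set μ := (volume : Measure (EuclideanSpace ℝ (Fin n)))
  have hW : Integrable (fun p : EuclideanSpace ℝ (Fin n) × EuclideanSpace ℝ (Fin n) =>
      γ p.1 * h p.2) (μ.prod μ) := hγ.mul_prod hh
  have := (measurePreserving_sub_prod (G := EuclideanSpace ℝ (Fin n)) μ μ).integrable_comp
    hW.aestronglyMeasurable |>.mpr hW
  refine this.congr (Filter.Eventually.of_forall fun p => ?_)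
  simp [Function.comp_def, mul_comm]

private lemma aux_mixed {γ f g : EuclideanSpace ℝ (Fin n) → ℝ}
    (hγ : Integrable γ (volume : Measure (EuclideanSpace ℝ (Fin n))))
    (hf : MemLp f 2 (volume : Measure (EuclideanSpace ℝ (Fin n))))
    (hg : MemLp g 2 (volume : Measure (EuclideanSpace ℝ (Fin n)))) :
    Integrable (fun p : EuclideanSpace ℝ (Fin n) × EuclideanSpace ℝ (Fin n) =>
      f p.1 * g p.2 * γ (p.1 - p.2)) (volume.prod volume) := by
  set μ := (volume : Measure (EuclideanSpace ℝ (Fin n))) with hμ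
  set Cf := eLpNorm f 2 μ with hCf
  set Cg := eLpNorm g 2 μ with hCg
  have h2 : (2 : ℝ≥0∞).toReal = 2 := by simp
  have heq : ∀ (h : EuclideanSpace ℝ (Fin n) → ℝ),
      eLpNorm h 2 μ = (∫⁻ y, (‖h y‖₊ : ℝ≥0∞) ^ (2:ℝ) ∂μ) ^ ((1:ℝ)/2) := by
    intro h
    rw [eLpNorm_eq_lintegral_rpow_enorm_toReal (by norm_num) (by norm_num), h2]
    rfl
  have hFm : AEStronglyMeasurable
      (fun p : EuclideanSpace ℝ (Fin n) × EuclideanSpace ℝ (Fin n) =>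
        f p.1 * g p.2 * γ (p.1 - p.2)) (μ.prod μ) := by
    refine AEStronglyMeasurable.mul (AEStronglyMeasurable.mul ?_ ?_) ?_
    · exact hf.1.comp_quasiMeasurePreserving Measure.quasiMeasurePreserving_fst
    · exact hg.1.comp_quasiMeasurePreserving Measure.quasiMeasurePreserving_snd
    · exact hγ.1.comp_quasiMeasurePreserving
        (Measure.quasiMeasurePreserving_fst.comp
          (measurePreserving_sub_prod μ μ).quasiMeasurePreserving)
  set G := fun q : EuclideanSpace ℝ (Fin n) × EuclideanSpace ℝ (Fin n) =>
      f (q.1 + q.2) * g q.2 * γ q.1 with hG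
  have hGm : AEStronglyMeasurable G (μ.prod μ) := by
    refine AEStronglyMeasurable.mul (AEStronglyMeasurable.mul ?_ ?_) ?_
    · exact hf.1.comp_quasiMeasurePreserving
        (Measure.quasiMeasurePreserving_fst.comp
          (measurePreserving_add_prod μ μ).quasiMeasurePreserving)
    · exact hg.1.comp_quasiMeasurePreserving Measure.quasiMeasurePreserving_snd
    · exact hγ.1.comp_quasiMeasurePreserving Measure.quasiMeasurePreserving_fst
  have hGi : Integrable G (μ.prod μ) := by
    refine ⟨hGm, ?_⟩
    rw [hasFiniteIntegral_def, lintegral_prod _ hGm.enorm]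
    have hbound : ∀ z, (∫⁻ y, (‖G (z, y)‖₊ : ℝ≥0∞) ∂μ) ≤ Cf * Cg * ‖γ z‖₊ := by
      intro z
      have hmz : MeasurePreserving (fun y : EuclideanSpace ℝ (Fin n) => z + y) μ μ :=
        measurePreserving_add_left μ z
      have hfz : AEMeasurable (fun y => (‖f (z + y)‖₊ : ℝ≥0∞)) μ :=
        hf.1.enorm.comp_quasiMeasurePreserving hmz.quasiMeasurePreserving
      have hgm : AEMeasurable (fun y => (‖g y‖₊ : ℝ≥0∞)) μ := hg.1.enorm
      have hcs : (∫⁻ y, (‖f (z + y)‖₊ : ℝ≥0∞) * ‖g y‖₊ ∂μ) ≤ Cf * Cg := by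
        have := ENNReal.lintegral_mul_le_Lp_mul_Lq μ
          Real.HolderConjugate.two_two hfz hgm
        refine le_trans this ?_
        have htr : (∫⁻ y, (‖f (z + y)‖₊ : ℝ≥0∞) ^ (2:ℝ) ∂μ)
            = ∫⁻ y, (‖f y‖₊ : ℝ≥0∞) ^ (2:ℝ) ∂μ :=
          hmz.lintegral_comp_emb (MeasurableEquiv.addLeft z).measurableEmbedding
            (fun w => (‖f w‖₊ : ℝ≥0∞) ^ (2:ℝ))
        rw [hCf, hCg, heq f, heq g, htr]
      have hpt : ∀ y, (‖G (z, y)‖₊ : ℝ≥0∞)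
          = (‖f (z + y)‖₊ : ℝ≥0∞) * ‖g y‖₊ * ‖γ z‖₊ := by
        intro y
        simp [hG, nnnorm_mul, ENNReal.coe_mul]
      simp_rw [hpt]
      rw [lintegral_mul_const' _ _ ENNReal.coe_ne_top]
      exact mul_le_mul_left hcs _
    calc (∫⁻ z, ∫⁻ y, (‖G (z, y)‖₊ : ℝ≥0∞) ∂μ ∂μ)
        ≤ ∫⁻ z, Cf * Cg * ‖γ z‖₊ ∂μ := lintegral_mono hbound
      _ = Cf * Cg * ∫⁻ z, (‖γ z‖₊ : ℝ≥0∞) ∂μ := lintegral_const_mul' _ _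
          (ENNReal.mul_ne_top (hf.2.trans_le le_top).ne (hg.2.trans_le le_top).ne)
      _ < ⊤ := ENNReal.mul_lt_top
          (ENNReal.mul_lt_top (hf.2.trans_le le_top) (hg.2.trans_le le_top)) hγ.2
  have hFT : Integrable ((fun p : EuclideanSpace ℝ (Fin n) × EuclideanSpace ℝ (Fin n) =>
      f p.1 * g p.2 * γ (p.1 - p.2)) ∘
      (fun q : EuclideanSpace ℝ (Fin n) × EuclideanSpace ℝ (Fin n) => (q.1 + q.2, q.2)))
      (μ.prod μ) := by
    refine hGi.congr (Filter.Eventually.of_forall fun q => ?_)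
    simp [hG, Function.comp_def, add_sub_cancel_right]
  exact ((measurePreserving_add_prod μ μ).integrable_comp hFm).mp hFT

end Helpers

/-- The nonlocal operator `𝓛u(x) = ∫ (u(y) - u(x)) γ(x - y) dy`. -/
noncomputable def nonlocalOp (n : ℕ) (γ u : EuclideanSpace ℝ (Fin n) → ℝ)
    (x : EuclideanSpace ℝ (Fin n)) : ℝ :=
  ∫ y, (u y - u x) * γ (x - y)

/-- **Nonlocal Green's identity.** For an even kernel `γ ∈ L¹(ℝⁿ)` and `u, v ∈ L²(ℝⁿ)`,
`∫ 𝓛u · v = -(1/2) ∬ (u(y)-u(x)) γ(x-y) (v(y)-v(x)) dy dx`, and both sides are finite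
(i.e. the corresponding integrands are integrable). -/
theorem nonlocal_green_identity
    (n : ℕ) (hn : 1 ≤ n)
    (γ : EuclideanSpace ℝ (Fin n) → ℝ)
    (hγ : Integrable γ)
    (hγeven : ∀ z, γ (-z) = γ z)
    (u v : EuclideanSpace ℝ (Fin n) → ℝ)
    (hu : MemLp u 2 (volume : Measure (EuclideanSpace ℝ (Fin n))))
    (hv : MemLp v 2 (volume : Measure (EuclideanSpace ℝ (Fin n)))) :
    Integrable (fun x => nonlocalOp n γ u x * v x) ∧
    Integrable
      (fun p : EuclideanSpace ℝ (Fin n) × EuclideanSpace ℝ (Fin n) =>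
        (u p.2 - u p.1) * γ (p.1 - p.2) * (v p.2 - v p.1))
      ((volume : Measure (EuclideanSpace ℝ (Fin n))).prod volume) ∧
    (∫ x, nonlocalOp n γ u x * v x) =
      -(1/2) * ∫ x, ∫ y, (u y - u x) * γ (x - y) * (v y - v x) := by
  have huv : Integrable (fun x => u x * v x) (volume : Measure (EuclideanSpace ℝ (Fin n))) :=
    l2mul hu hv
  have hA := aux_mixed hγ hv hu
  have hA' := aux_mixed hγ hu hv
  have hB1 := aux_diag_fst hγ huv
  have hB2 := aux_diag_snd hγ huv
  have hH : Integrable (fun p : EuclideanSpace ℝ (Fin n) × EuclideanSpace ℝ (Fin n) =>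
      (u p.2 - u p.1) * γ (p.1 - p.2) * v p.1) (volume.prod volume) :=
    (hA.sub hB1).congr (Filter.Eventually.of_forall fun p => by simp only [Pi.sub_apply]; ring)
  have hK : Integrable (fun p : EuclideanSpace ℝ (Fin n) × EuclideanSpace ℝ (Fin n) =>
      (u p.2 - u p.1) * γ (p.1 - p.2) * v p.2) (volume.prod volume) :=
    (hB2.sub hA').congr (Filter.Eventually.of_forall fun p => by simp only [Pi.sub_apply]; ring)
  have hGint : Integrable (fun p : EuclideanSpace ℝ (Fin n) × EuclideanSpace ℝ (Fin n) =>
      (u p.2 - u p.1) * γ (p.1 - p.2) * (v p.2 - v p.1)) (volume.prod volume) :=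
    (hK.sub hH).congr (Filter.Eventually.of_forall fun p => by simp only [Pi.sub_apply]; ring)
  have hptwise : ∀ x, nonlocalOp n γ u x * v x
      = ∫ y, (u y - u x) * γ (x - y) * v x := by
    intro x
    rw [nonlocalOp, ← integral_mul_const]
  have hfirst : Integrable (fun x => nonlocalOp n γ u x * v x)
      (volume : Measure (EuclideanSpace ℝ (Fin n))) := by
    refine hH.integral_prod_left.congr (Filter.Eventually.of_forall fun x => ?_)
    exact (hptwise x).symm
  refine ⟨hfirst, hGint, ?_⟩
  have hLHS : (∫ x, nonlocalOp n γ u x * v x)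
      = ∫ p : EuclideanSpace ℝ (Fin n) × EuclideanSpace ℝ (Fin n),
          (u p.2 - u p.1) * γ (p.1 - p.2) * v p.1 ∂(volume.prod volume) := by
    rw [integral_prod _ hH]
    exact integral_congr_ae (Filter.Eventually.of_forall fun x => hptwise x)
  have hRHS : (∫ x, ∫ y, (u y - u x) * γ (x - y) * (v y - v x))
      = ∫ p : EuclideanSpace ℝ (Fin n) × EuclideanSpace ℝ (Fin n),
          (u p.2 - u p.1) * γ (p.1 - p.2) * (v p.2 - v p.1) ∂(volume.prod volume) :=
    (integral_prod _ hGint).symm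
  have hswap : (∫ p : EuclideanSpace ℝ (Fin n) × EuclideanSpace ℝ (Fin n),
        (u p.2 - u p.1) * γ (p.1 - p.2) * v p.2 ∂(volume.prod volume))
      = - ∫ p : EuclideanSpace ℝ (Fin n) × EuclideanSpace ℝ (Fin n),
          (u p.2 - u p.1) * γ (p.1 - p.2) * v p.1 ∂(volume.prod volume) := by
    rw [← integral_prod_swap (fun p : EuclideanSpace ℝ (Fin n) × EuclideanSpace ℝ (Fin n) =>
      (u p.2 - u p.1) * γ (p.1 - p.2) * v p.2), ← integral_neg]
    refine integral_congr_ae (Filter.Eventually.of_forall fun p => ?_)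
    show (u p.1 - u p.2) * γ (p.2 - p.1) * v p.1
        = -((u p.2 - u p.1) * γ (p.1 - p.2) * v p.1)
    rw [show p.2 - p.1 = -(p.1 - p.2) from (neg_sub _ _).symm, hγeven]
    ring
  have hsplit : (∫ p : EuclideanSpace ℝ (Fin n) × EuclideanSpace ℝ (Fin n),
        (u p.2 - u p.1) * γ (p.1 - p.2) * (v p.2 - v p.1) ∂(volume.prod volume))
      = (∫ p : EuclideanSpace ℝ (Fin n) × EuclideanSpace ℝ (Fin n),
          (u p.2 - u p.1) * γ (p.1 - p.2) * v p.2 ∂(volume.prod volume))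
        - ∫ p : EuclideanSpace ℝ (Fin n) × EuclideanSpace ℝ (Fin n),
          (u p.2 - u p.1) * γ (p.1 - p.2) * v p.1 ∂(volume.prod volume) := by
    rw [← integral_sub hK hH]
    exact integral_congr_ae (Filter.Eventually.of_forall fun p => by simp only [Pi.sub_apply]; ring)
  rw [hLHS, hRHS, hsplit, hswap]
  ring
end
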